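/- With the phase structure above, if every item in the online algorithm's cache at the end of phase i was requested during phase i, then OPT must have evicted at least h_{i+1} items during phase i, i.e., OPT_i ≥ h_{i+1}, where h_{i+1} is the number of items in OPT's cache but not in the online algorithm's cache at the start of phase i+1. -/

import Mathlib

lemma exists_evict_time {α : Type*} [DecidableEq α] (B : ℕ → Finset α) (x : α) :
    ∀ n m, m ≤ n → x ∈ B m → x ∉ B n →
      ∃ t, m ≤ t ∧ t < n ∧ x ∈ B t ∧ x ∉ B (t + 1) := by
  intro n
  induction n with
  | zero =>
    intro m hm hx hxn
    exact absurd ((Nat.le_zero.mp hm) ▸ hx) hxn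
  | succ n ih =>
    intro m hm hx hxn
    have hmn : m ≤ n := by
      rcases Nat.lt_or_ge m (n+1) with h | h
      · omega
      · exfalso; have : m = n + 1 := by omega
        exact hxn (this ▸ hx)
    by_cases hxB : x ∈ B n
    · exact ⟨n, hmn, Nat.lt_succ_self n, hxB, hxn⟩
    · obtain ⟨t, h1, h2, h3, h4⟩ := ih m hmn hx hxB
      exact ⟨t, h1, by omega, h3, h4⟩

/-- Phase `i` covers request times `[a, b)`; `A` is the online
algorithm's cache (full, with `k` items, at the end of the phase) and `B` is OPT's
cache (demand paging: at most `k` items, the requested item is loaded, and an item is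
evicted—at most one per step—only on a miss).  If every item in the online cache
`A b` at the end of phase `i` was requested during the phase, then OPT must have
evicted at least `h_{i+1}` items during the phase, and in particular its misses in
the phase satisfy `OPTᵢ ≥ h_{i+1}`, where `h_{i+1} = |B b \ A b|` is the number of
items in OPT's cache but not the online cache at the start of phase `i+1`. -/
theorem opt_phase_misses_ge_h_next
    {α : Type*} [DecidableEq α] (σ : ℕ → α) (A B : ℕ → Finset α) (a b k : ℕ)
    (hreq : ∀ x ∈ A b, ∃ s, a ≤ s ∧ s < b ∧ σ s = x)
    (hAfull : k ≤ (A b).card)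
    (hBsize : ∀ s, (B s).card ≤ k)
    (hBload : ∀ s, σ s ∈ B (s + 1))
    (hBevict : ∀ s, (B s \ B (s + 1)).card ≤ if σ s ∈ B s then 0 else 1) :
    (B b \ A b).card ≤ ((Finset.Ico a b).filter (fun s => σ s ∉ B s)).card := by
  classical
  -- Step 1: |B b \ A b| ≤ |A b \ B b|
  have h1 : (B b \ A b).card + (B b ∩ A b).card = (B b).card :=
    Finset.card_sdiff_add_card_inter _ _
  have h2 : (A b \ B b).card + (A b ∩ B b).card = (A b).card :=
    Finset.card_sdiff_add_card_inter _ _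
  have hint : (B b ∩ A b).card = (A b ∩ B b).card := by
    rw [Finset.inter_comm]
  have hred : (B b \ A b).card ≤ (A b \ B b).card := by
    have := hBsize b
    omega
  refine le_trans hred ?_
  -- Step 2: each x ∈ A b \ B b has an eviction time
  have key : ∀ x ∈ A b \ B b, ∃ t, (a ≤ t ∧ t < b) ∧ x ∈ B t ∧ x ∉ B (t + 1) := by
    intro x hx
    rw [Finset.mem_sdiff] at hx
    obtain ⟨hxA, hxB⟩ := hx
    obtain ⟨s, hs1, hs2, hs3⟩ := hreq x hxA
    have hxB1 : x ∈ B (s + 1) := hs3 ▸ hBload s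
    have hsb : s + 1 ≤ b := hs2
    obtain ⟨t, ht1, ht2, ht3, ht4⟩ := exists_evict_time B x b (s + 1) hsb hxB1 hxB
    exact ⟨t, ⟨by omega, ht2⟩, ht3, ht4⟩
  choose f hf1 hf2 using key
  apply Finset.card_le_card_of_injOn (fun x => if h : x ∈ A b \ B b then f x h else 0)
  · intro x hx
    have hx : x ∈ A b \ B b := hx
    rw [Finset.mem_coe]
    beta_reduce
    rw [dif_pos hx]
    rw [Finset.mem_filter, Finset.mem_Ico]
    obtain ⟨ht3, ht4⟩ := hf2 x hx
    refine ⟨hf1 x hx, ?_⟩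
    intro hσ
    have hle := hBevict (f x hx)
    rw [if_pos hσ] at hle
    have : x ∈ B (f x hx) \ B (f x hx + 1) := Finset.mem_sdiff.mpr ⟨ht3, ht4⟩
    have := Finset.card_pos.mpr ⟨x, this⟩
    omega
  · intro x hx y hy heq
    have hx : x ∈ A b \ B b := hx
    have hy : y ∈ A b \ B b := hy
    simp only [dif_pos hx, dif_pos hy] at heq
    have heq' : f x hx = f y hy := heq
    have hxm : x ∈ B (f x hx) \ B (f x hx + 1) :=
      Finset.mem_sdiff.mpr ⟨(hf2 x hx).1, (hf2 x hx).2⟩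
    have hym : y ∈ B (f x hx) \ B (f x hx + 1) := by
      rw [heq']
      exact Finset.mem_sdiff.mpr ⟨(hf2 y hy).1, (hf2 y hy).2⟩
    have hle := hBevict (f x hx)
    have hcard : (B (f x hx) \ B (f x hx + 1)).card ≤ 1 := le_trans hle (by split <;> omega)
    exact Finset.card_le_one.mp hcard x hxm y hym
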